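/- Let x : ℝ → ℝ be continuous with |x| ≤ c, b > c > 0, δ > 0, σ > 0. Suppose after each firing t_n there is a non-sampling interval of length T_n^ns ∈ [T_inf, T_sup], and the next firing satisfies (1/σ)·∫_{t_n+T_n^ns}^{t_{n+1}}(x(s)+b) ds = δ. Then T_n = t_{n+1}−t_n satisfies σδ/(b+c) + T_inf ≤ T_n ≤ σδ/(b−c) + T_sup. -/

import Mathlib

theorem stmt12 (x : ℝ → ℝ) (c b δ σ Tinf Tsup Tns tn tn1 : ℝ)
    (hx : Continuous x) (hc : ∀ s, |x s| ≤ c) (hb : b > c) (hc0 : c > 0)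
    (hδ : δ > 0) (hσ : σ > 0)
    (hTinf : 0 ≤ Tinf) (hTord : Tinf ≤ Tsup) (hTns : Tns ∈ Set.Icc Tinf Tsup)
    (ht : tn1 > tn + Tns)
    (hfire : (1 / σ) * ∫ s in (tn + Tns)..tn1, (x s + b) = δ) :
    σ * δ / (b + c) + Tinf ≤ tn1 - tn ∧ tn1 - tn ≤ σ * δ / (b - c) + Tsup := by
  set a := tn + Tns with ha
  have hI : (∫ s in a..tn1, (x s + b)) = σ * δ := by
    field_simp at hfire; linarith
  have hint : IntervalIntegrable (fun s => x s + b) MeasureTheory.volume a tn1 :=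
    (hx.add continuous_const).intervalIntegrable _ _
  have hcint : ∀ C : ℝ, IntervalIntegrable (fun _ => C) MeasureTheory.volume a tn1 :=
    fun C => intervalIntegrable_const
  have hle : a ≤ tn1 := le_of_lt ht
  have hlow : (b - c) * (tn1 - a) ≤ σ * δ := by
    rw [← hI]
    calc (b - c) * (tn1 - a) = ∫ _ in a..tn1, (b - c) := by
          rw [intervalIntegral.integral_const]; ring_nf
      _ ≤ ∫ s in a..tn1, (x s + b) := by
          apply intervalIntegral.integral_mono_on hle (hcint _) hint
          intro s _
          have := abs_le.mp (hc s); linarith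
  have hhigh : σ * δ ≤ (b + c) * (tn1 - a) := by
    rw [← hI]
    calc (∫ s in a..tn1, (x s + b)) ≤ ∫ _ in a..tn1, (b + c) := by
          apply intervalIntegral.integral_mono_on hle hint (hcint _)
          intro s _
          have := abs_le.mp (hc s); linarith
      _ = (b + c) * (tn1 - a) := by
          rw [intervalIntegral.integral_const, smul_eq_mul]; ring
  have hbc1 : (0:ℝ) < b - c := by linarith
  have hbc2 : (0:ℝ) < b + c := by linarith
  obtain ⟨h1, h2⟩ := hTns
  constructor
  · have : σ * δ / (b + c) ≤ tn1 - a := by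
      rw [div_le_iff₀ hbc2]; linarith
    have : tn1 - tn = (tn1 - a) + Tns := by rw [ha]; ring
    rw [this]
    have h3 : σ * δ / (b + c) ≤ tn1 - a := by rw [div_le_iff₀ hbc2]; linarith
    linarith
  · have h4 : tn1 - a ≤ σ * δ / (b - c) := by rw [le_div_iff₀ hbc1]; linarith
    have : tn1 - tn = (tn1 - a) + Tns := by rw [ha]; ring
    linarith
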